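/- Fix an integer m ≥ 1. For x in C_∞^G(Δ_G^m) set N_∞(x) = ∑_{i=1}^m |log x_i| + sup_n |(1/n) ∑_{k=1}^n Δ^m (log x)_k|. Then N_∞ is a geometric norm on C_∞^G(Δ_G^m): (1) N_∞(x) ≥ 0 for all x in the space; (2) N_∞(x) = 0 if and only if x_k = 1 for every k; (3) N_∞ of the sequence (exp(log a · log x_k)) equals |log a| · N_∞(x) for every positive real a; (4) N_∞ of the pointwise product (x_k · z_k) is at most N_∞(x) + N_∞(z) for all x, z in the space. (Here N_∞(x) = log ‖x‖_∞^G, the logarithm of the geometric norm ‖x‖_∞^G = exp N_∞(x).) -/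
import Mathlib


/-- Classical `m`-th order forward difference
`Δ^m y_k = ∑_{v=0}^m (−1)^v C(m,v) y_{k+v}`. -/
noncomputable def fdiff (m : ℕ) (y : ℕ → ℝ) (k : ℕ) : ℝ :=
  ∑ v ∈ Finset.range (m + 1), (-1 : ℝ) ^ v * (m.choose v : ℝ) * y (k + v)

/-- The Cesàro mean `(1/n) ∑_{k=1}^n Δ^m (log x)_k`. -/
noncomputable def cesaro (m : ℕ) (x : ℕ → ℝ) (n : ℕ) : ℝ :=
  (1 / (n : ℝ)) * ∑ k ∈ Finset.Icc 1 n, fdiff m (fun j => Real.log (x j)) k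

/-- Membership in the bigeometric Cesàro difference space `C_p^G(Δ_G^m)`. -/
def memCpG (m : ℕ) (p : ℝ) (x : ℕ → ℝ) : Prop :=
  (∀ k, 1 ≤ k → 0 < x k) ∧ Summable (fun n : ℕ => |cesaro m x n| ^ p)

/-- Membership in the bigeometric Cesàro difference space `C_∞^G(Δ_G^m)`. -/
def memCinfG (m : ℕ) (x : ℕ → ℝ) : Prop :=
  (∀ k, 1 ≤ k → 0 < x k) ∧ ∃ C : ℝ, ∀ n : ℕ, |cesaro m x n| ≤ C

/-- `N_∞(x) = log ‖x‖_∞^G`, the logarithm of the geometric norm on `C_∞^G(Δ_G^m)`. -/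
noncomputable def NinfG (m : ℕ) (x : ℕ → ℝ) : ℝ :=
  (∑ i ∈ Finset.Icc 1 m, |Real.log (x i)|) + ⨆ n : ℕ, |cesaro m x n|

/-! ### Auxiliary lemmas -/

lemma bddAbove_cesaro (m : ℕ) (x : ℕ → ℝ) (h : ∃ C : ℝ, ∀ n : ℕ, |cesaro m x n| ≤ C) :
    BddAbove (Set.range fun n : ℕ => |cesaro m x n|) := by
  obtain ⟨C, hC⟩ := h
  exact ⟨C, by rintro _ ⟨n, rfl⟩; exact hC n⟩

lemma fdiff_smul (m : ℕ) (c : ℝ) (y : ℕ → ℝ) (k : ℕ) :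
    fdiff m (fun j => c * y j) k = c * fdiff m y k := by
  simp only [fdiff, Finset.mul_sum]
  exact Finset.sum_congr rfl fun v _ => by ring

lemma cesaro_eq_zero_of_log_eq_zero (m : ℕ) (x : ℕ → ℝ)
    (h : ∀ k, 1 ≤ k → Real.log (x k) = 0) (n : ℕ) : cesaro m x n = 0 := by
  unfold cesaro
  rw [Finset.sum_eq_zero, mul_zero]
  intro k hk
  rw [Finset.mem_Icc] at hk
  unfold fdiff
  apply Finset.sum_eq_zero
  intro v _
  simp only [h (k + v) (le_trans hk.1 (Nat.le_add_right k v)), mul_zero]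

/-- If all Cesàro means vanish, the forward differences vanish at every index `k ≥ 1`. -/
lemma fdiff_eq_zero_of_cesaro (m : ℕ) (x : ℕ → ℝ)
    (h : ∀ n, cesaro m x n = 0) (k : ℕ) (hk : 1 ≤ k) :
    fdiff m (fun j => Real.log (x j)) k = 0 := by
  have hS : ∀ n : ℕ, ∑ j ∈ Finset.Icc 1 n, fdiff m (fun j => Real.log (x j)) j = 0 := by
    intro n
    rcases Nat.eq_zero_or_pos n with rfl | hn
    · simp
    · have := h n
      unfold cesaro at this
      have hn' : (1 : ℝ) / (n : ℝ) ≠ 0 := by positivity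
      exact (mul_eq_zero.mp this).resolve_left hn'
  obtain ⟨j, rfl⟩ := Nat.exists_eq_add_of_le hk
  have h1 := hS (1 + j)
  have h2 := hS j
  have hsplit : ∑ i ∈ Finset.Icc 1 (1 + j), fdiff m (fun t => Real.log (x t)) i
      = (∑ i ∈ Finset.Icc 1 j, fdiff m (fun t => Real.log (x t)) i)
        + fdiff m (fun t => Real.log (x t)) (1 + j) := by
    rw [add_comm 1 j]
    exact Finset.sum_Icc_succ_top (Nat.le_add_left 1 j) _
  rw [hsplit, h2, zero_add] at h1
  exact h1

/-- If `log x` vanishes on `[1, m]` and all `m`-th forward differences of `log x` vanish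
at indices `≥ 1`, then `log x` vanishes at every index `≥ 1`. -/
lemma log_eq_zero_of_fdiff (m : ℕ) (hm : 1 ≤ m) (x : ℕ → ℝ)
    (hbase : ∀ i, 1 ≤ i → i ≤ m → Real.log (x i) = 0)
    (hfd : ∀ k, 1 ≤ k → fdiff m (fun j => Real.log (x j)) k = 0) :
    ∀ k, 1 ≤ k → Real.log (x k) = 0 := by
  intro k
  induction k using Nat.strong_induction_on with
  | _ k ih =>
    intro hk
    rcases le_or_gt k m with hkm | hkm
    · exact hbase k hk hkm
    · -- k > m, so k = j + m with j ≥ 1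
      obtain ⟨j, rfl⟩ : ∃ j, k = j + m := ⟨k - m, (Nat.sub_add_cancel hkm.le).symm⟩
      have hj : 1 ≤ j := by omega
      have h0 := hfd j hj
      unfold fdiff at h0
      rw [Finset.sum_range_succ] at h0
      have hrest : ∑ v ∈ Finset.range m,
          (-1 : ℝ) ^ v * (m.choose v : ℝ) * Real.log (x (j + v)) = 0 := by
        apply Finset.sum_eq_zero
        intro v hv
        rw [Finset.mem_range] at hv
        have : Real.log (x (j + v)) = 0 := ih (j + v) (by omega) (by omega)
        rw [this, mul_zero]
      rw [hrest, zero_add, Nat.choose_self] at h0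
      have hne : ((-1 : ℝ) ^ m * (1 : ℕ)) ≠ 0 := by
        simp [pow_ne_zero]
      have := mul_eq_zero.mp h0
      tauto

lemma cesaro_smul (m : ℕ) (a : ℝ) (x : ℕ → ℝ) (n : ℕ) :
    cesaro m (fun k => Real.exp (Real.log a * Real.log (x k))) n
      = Real.log a * cesaro m x n := by
  unfold cesaro
  have : ∀ k : ℕ, fdiff m (fun j => Real.log (Real.exp (Real.log a * Real.log (x j)))) k
      = Real.log a * fdiff m (fun j => Real.log (x j)) k := by
    intro k
    simp only [Real.log_exp]
    exact fdiff_smul m (Real.log a) (fun j => Real.log (x j)) k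
  simp only [this, Finset.mul_sum]
  exact Finset.sum_congr rfl fun k _ => by ring

lemma cesaro_mul (m : ℕ) (x z : ℕ → ℝ) (hx : ∀ k, 1 ≤ k → 0 < x k)
    (hz : ∀ k, 1 ≤ k → 0 < z k) (n : ℕ) :
    cesaro m (fun k => x k * z k) n = cesaro m x n + cesaro m z n := by
  unfold cesaro
  rw [← mul_add, ← Finset.sum_add_distrib]
  congr 1
  apply Finset.sum_congr rfl
  intro k hk
  rw [Finset.mem_Icc] at hk
  unfold fdiff
  rw [← Finset.sum_add_distrib]
  apply Finset.sum_congr rfl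
  intro v _
  have h1 : 1 ≤ k + v := le_trans hk.1 (Nat.le_add_right k v)
  simp only [Real.log_mul (hx _ h1).ne' (hz _ h1).ne']
  ring

/-- `N_∞` is a (geometric) norm on `C_∞^G(Δ_G^m)`. -/
theorem NinfG_is_norm (m : ℕ) (hm : 1 ≤ m) :
    (∀ x : ℕ → ℝ, memCinfG m x → 0 ≤ NinfG m x) ∧
    (∀ x : ℕ → ℝ, memCinfG m x →
      (NinfG m x = 0 ↔ ∀ k, 1 ≤ k → x k = 1)) ∧
    (∀ x : ℕ → ℝ, memCinfG m x → ∀ a : ℝ, 0 < a →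
      NinfG m (fun k => Real.exp (Real.log a * Real.log (x k))) =
        |Real.log a| * NinfG m x) ∧
    (∀ x z : ℕ → ℝ, memCinfG m x → memCinfG m z →
      NinfG m (fun k => x k * z k) ≤ NinfG m x + NinfG m z) := by
  have hsum_nonneg : ∀ x : ℕ → ℝ, 0 ≤ ∑ i ∈ Finset.Icc 1 m, |Real.log (x i)| :=
    fun x => Finset.sum_nonneg fun i _ => abs_nonneg _
  have hsup_nonneg : ∀ x : ℕ → ℝ, 0 ≤ ⨆ n : ℕ, |cesaro m x n| :=
    fun x => Real.iSup_nonneg fun n => abs_nonneg _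
  have hnonneg : ∀ x : ℕ → ℝ, memCinfG m x → 0 ≤ NinfG m x := by
    intro x _
    exact add_nonneg (hsum_nonneg x) (hsup_nonneg x)
  refine ⟨hnonneg, ?_, ?_, ?_⟩
  · -- definiteness
    intro x hx
    constructor
    · intro h0 k hk
      have hs := hsum_nonneg x
      have ht := hsup_nonneg x
      unfold NinfG at h0
      have h1 : ∑ i ∈ Finset.Icc 1 m, |Real.log (x i)| = 0 := by linarith
      have h2 : (⨆ n : ℕ, |cesaro m x n|) = 0 := by linarith
      -- base: log x i = 0 for i ∈ [1, m]
      have hbase : ∀ i, 1 ≤ i → i ≤ m → Real.log (x i) = 0 := by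
        intro i hi1 him
        have := (Finset.sum_eq_zero_iff_of_nonneg
          (fun i _ => abs_nonneg (Real.log (x i)))).mp h1 i (Finset.mem_Icc.mpr ⟨hi1, him⟩)
        exact abs_eq_zero.mp this
      -- all cesaro means vanish
      have hces : ∀ n, cesaro m x n = 0 := by
        intro n
        have hb := bddAbove_cesaro m x hx.2
        have := le_ciSup hb n
        rw [h2] at this
        exact abs_eq_zero.mp (le_antisymm this (abs_nonneg _))
      have hfd := fdiff_eq_zero_of_cesaro m x hces
      have hlog := log_eq_zero_of_fdiff m hm x hbase hfd k hk
      have hxk := hx.1 k hk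
      rcases Real.log_eq_zero.mp hlog with h | h | h
      · exact absurd h hxk.ne'
      · exact h
      · exact absurd h (by linarith)
    · intro h1
      have hlog : ∀ k, 1 ≤ k → Real.log (x k) = 0 := by
        intro k hk; rw [h1 k hk, Real.log_one]
      unfold NinfG
      have hsum : ∑ i ∈ Finset.Icc 1 m, |Real.log (x i)| = 0 := by
        apply Finset.sum_eq_zero
        intro i hi
        rw [Finset.mem_Icc] at hi
        rw [hlog i hi.1, abs_zero]
      have hsup : (⨆ n : ℕ, |cesaro m x n|) = 0 := by
        have : ∀ n : ℕ, |cesaro m x n| = 0 := fun n => by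
          rw [cesaro_eq_zero_of_log_eq_zero m x hlog n, abs_zero]
        simp only [this, ciSup_const]
      rw [hsum, hsup, add_zero]
  · -- homogeneity
    intro x hx a _
    unfold NinfG
    have h1 : ∑ i ∈ Finset.Icc 1 m, |Real.log (Real.exp (Real.log a * Real.log (x i)))|
        = |Real.log a| * ∑ i ∈ Finset.Icc 1 m, |Real.log (x i)| := by
      rw [Finset.mul_sum]
      apply Finset.sum_congr rfl
      intro i _
      rw [Real.log_exp, abs_mul]
    have h2 : (⨆ n : ℕ, |cesaro m (fun k => Real.exp (Real.log a * Real.log (x k))) n|)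
        = |Real.log a| * ⨆ n : ℕ, |cesaro m x n| := by
      rw [Real.mul_iSup_of_nonneg (abs_nonneg _)]
      exact iSup_congr fun n => by rw [cesaro_smul, abs_mul]
    rw [h1, h2, mul_add]
  · -- triangle inequality
    intro x z hx hz
    unfold NinfG
    have hbx := bddAbove_cesaro m x hx.2
    have hbz := bddAbove_cesaro m z hz.2
    have h1 : ∑ i ∈ Finset.Icc 1 m, |Real.log (x i * z i)|
        ≤ (∑ i ∈ Finset.Icc 1 m, |Real.log (x i)|)
          + ∑ i ∈ Finset.Icc 1 m, |Real.log (z i)| := by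
      rw [← Finset.sum_add_distrib]
      apply Finset.sum_le_sum
      intro i hi
      rw [Finset.mem_Icc] at hi
      rw [Real.log_mul (hx.1 i hi.1).ne' (hz.1 i hi.1).ne']
      exact abs_add_le _ _
    have h2 : (⨆ n : ℕ, |cesaro m (fun k => x k * z k) n|)
        ≤ (⨆ n : ℕ, |cesaro m x n|) + ⨆ n : ℕ, |cesaro m z n| := by
      apply ciSup_le
      intro n
      rw [cesaro_mul m x z hx.1 hz.1 n]
      calc |cesaro m x n + cesaro m z n| ≤ |cesaro m x n| + |cesaro m z n| := abs_add_le _ _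
        _ ≤ _ := add_le_add (le_ciSup hbx n) (le_ciSup hbz n)
    calc _ ≤ ((∑ i ∈ Finset.Icc 1 m, |Real.log (x i)|)
          + ∑ i ∈ Finset.Icc 1 m, |Real.log (z i)|)
          + ((⨆ n : ℕ, |cesaro m x n|) + ⨆ n : ℕ, |cesaro m z n|) := add_le_add h1 h2
      _ = _ := by ring
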